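/- Let U ⊆ ℝ² be a region (open set), let X : U → ℝ² be a continuously differentiable vector field, and let V : U → ℝ be continuously differentiable with ∇V(p) · X(p) ≤ 0 for all p ∈ U. Let p : [0,∞) → ℝ² be a solution of ṗ = X(p) with p(t) ∈ U for all t ≥ 0. Then every ω-limit point q of p that lies in U satisfies ∇V(q) · X(q) = 0; i.e., ω(p(0)) ∩ U ⊆ {q ∈ U : ∇V(q) · X(q) = 0}, where ω(p(0)) = {q ∈ ℝ² : p(t_k) → q for some sequence t_k → ∞}. -/

import Mathlib

open Filter Metric Set Topology

/-- A trajectory with speed bounded by `M` near `q` that starts in the ball of radius `r/2`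
around `q` stays in the ball of radius `3r/4` for time `δ` with `M * δ ≤ r/4`. -/
lemma stay_in_ball_aux {X : ℝ × ℝ → ℝ × ℝ} {p : ℝ → ℝ × ℝ} {q : ℝ × ℝ} {r M t₀ δ : ℝ}
    (hp : ∀ t, 0 ≤ t → HasDerivAt p (X (p t)) t)
    (hr : 0 < r) (hM : 0 < M) (hδ : 0 ≤ δ) (hMδ : M * δ ≤ r / 4)
    (ht₀ : 0 ≤ t₀) (hstart : dist (p t₀) q ≤ r / 2)
    (hXb : ∀ x, dist x q ≤ 3 * r / 4 → ‖X x‖ ≤ M) :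
    ∀ t ∈ Icc t₀ (t₀ + δ), dist (p t) q ≤ 3 * r / 4 := by
  set S : Set ℝ := {t | t ∈ Icc t₀ (t₀ + δ) ∧ ∀ u ∈ Icc t₀ t, dist (p u) q ≤ 3 * r / 4} with hS
  have ht₀S : t₀ ∈ S := by
    refine ⟨⟨le_rfl, by linarith⟩, fun u hu => ?_⟩
    have : u = t₀ := le_antisymm hu.2 hu.1
    subst this; linarith
  have hne : S.Nonempty := ⟨t₀, ht₀S⟩
  have hbdd : BddAbove S := ⟨t₀ + δ, fun t ht => ht.1.2⟩
  set T := sSup S with hT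
  have hTle : T ≤ t₀ + δ := csSup_le hne fun t ht => ht.1.2
  have hTge : t₀ ≤ T := le_csSup hbdd ht₀S
  have hA : ∀ u ∈ Ico t₀ T, dist (p u) q ≤ 3 * r / 4 := by
    intro u hu
    obtain ⟨t, htS, hut⟩ := exists_lt_of_lt_csSup hne hu.2
    exact htS.2 u ⟨hu.1, hut.le⟩
  have hA' : ∀ u ∈ Icc t₀ T, dist (p u) q ≤ 3 * r / 4 := by
    intro u hu
    rcases lt_or_eq_of_le hu.2 with h | h
    · exact hA u ⟨hu.1, h⟩
    subst h
    rcases lt_or_eq_of_le hTge with h' | h'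
    · -- t₀ < T : use continuity from the left
      have hc : ContinuousAt p T := (hp T (ht₀.trans hTge)).differentiableAt.continuousAt
      have htd : Tendsto (fun v => dist (p v) q) (𝓝[<] T) (𝓝 (dist (p T) q)) :=
        ((hc.tendsto.mono_left nhdsWithin_le_nhds).dist tendsto_const_nhds)
      refine le_of_tendsto htd ?_
      filter_upwards [mem_nhdsWithin_of_mem_nhds (Ioi_mem_nhds h'), self_mem_nhdsWithin]
        with v hv1 hv2
      exact hA v ⟨le_of_lt hv1, hv2⟩
    · rw [← h']; exact hstart.trans (by linarith)
  -- mean value estimate on [t₀, T]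
  have hmvt : ∀ x ∈ Icc t₀ T, ‖p x - p t₀‖ ≤ M * (x - t₀) := by
    refine norm_image_sub_le_of_norm_deriv_le_segment'
      (f' := fun u => X (p u)) (fun u hu => (hp u (ht₀.trans hu.1)).hasDerivWithinAt)
      (fun u hu => hXb _ (hA' u ⟨hu.1, hu.2.le⟩))
  have hTeq : T = t₀ + δ := by
    by_contra h
    have hTlt : T < t₀ + δ := lt_of_le_of_ne hTle h
    have hdT : dist (p T) q < 3 * r / 4 := by
      have h1 := hmvt T ⟨hTge, le_rfl⟩
      have h2 : dist (p T) q ≤ dist (p T) (p t₀) + dist (p t₀) q := dist_triangle _ _ _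
      rw [← dist_eq_norm] at h1
      have h3 : M * (T - t₀) < M * δ := by
        apply mul_lt_mul_of_pos_left _ hM
        linarith
      linarith
    have hcT : ContinuousAt (fun u => dist (p u) q) T :=
      ((hp T (ht₀.trans hTge)).differentiableAt.continuousAt).dist continuousAt_const
    have hev : ∀ᶠ u in 𝓝 T, dist (p u) q < 3 * r / 4 :=
      hcT.tendsto.eventually_lt_const hdT
    obtain ⟨ε, hε, hball⟩ := Metric.eventually_nhds_iff.mp hev
    set T' := min (T + ε / 2) (t₀ + δ) with hT'
    have hTT' : T < T' := lt_min (by linarith) hTlt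
    have hT'S : T' ∈ S := by
      refine ⟨⟨hTge.trans hTT'.le, min_le_right _ _⟩, fun u hu => ?_⟩
      rcases le_or_gt u T with h | h
      · exact hA' u ⟨hu.1, h⟩
      · refine (hball ?_).le
        have h1 : u ≤ T + ε / 2 := hu.2.trans (min_le_left _ _)
        rw [Real.dist_eq, abs_lt]
        constructor <;> linarith
    exact absurd (le_csSup hbdd hT'S) (not_le.mpr hTT')
  intro t ht
  exact hA' t (hTeq ▸ ht)

/-- One-sided mean value estimate: if `(V ∘ p)' ≤ c` on `[t₀, t₀ + δ]`, then
`V (p (t₀+δ)) ≤ V (p t₀) + c * δ`. -/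
lemma decrease_aux {V : ℝ × ℝ → ℝ} {p : ℝ → ℝ × ℝ} {g : ℝ → ℝ} {c t₀ δ : ℝ}
    (hδ : 0 ≤ δ)
    (hD : ∀ t ∈ Icc t₀ (t₀ + δ), HasDerivAt (fun s => V (p s)) (g t) t)
    (hg : ∀ t ∈ Icc t₀ (t₀ + δ), g t ≤ c) :
    V (p (t₀ + δ)) ≤ V (p t₀) + c * δ := by
  have hh : ∀ t ∈ Icc t₀ (t₀ + δ), HasDerivAt (fun s => V (p s) - c * s) (g t - c) t := by
    intro t ht
    have h2 : HasDerivAt (fun s : ℝ => c * s) c t := by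
      simpa using (hasDerivAt_id t).const_mul c
    exact (hD t ht).sub h2
  have hanti : AntitoneOn (fun s => V (p s) - c * s) (Icc t₀ (t₀ + δ)) := by
    apply antitoneOn_of_deriv_nonpos (convex_Icc _ _)
    · exact fun t ht => (hh t ht).differentiableAt.continuousAt.continuousWithinAt
    · rw [interior_Icc]
      exact fun t ht =>
        (hh t (Ioo_subset_Icc_self ht)).differentiableAt.differentiableWithinAt
    · rw [interior_Icc]
      intro t ht
      rw [(hh t (Ioo_subset_Icc_self ht)).deriv]
      have := hg t (Ioo_subset_Icc_self ht)
      linarith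
  have := hanti (left_mem_Icc.mpr (by linarith)) (right_mem_Icc.mpr (by linarith)) (by linarith)
  simp only [] at this
  nlinarith

/-- Lyapunov's theorem (omega-limit version): if `V` is `C¹` on an open region `U` with
`∇V · X ≤ 0` on `U`, and `p(t)` is a solution of `ṗ = X(p)` staying in `U` for all
`t ≥ 0`, then every ω-limit point `q` of the trajectory lying in `U` satisfies
`∇V(q) · X(q) = 0`. -/
theorem lyapunov_omega_limit
    (U : Set (ℝ × ℝ)) (hU : IsOpen U)
    (X : ℝ × ℝ → ℝ × ℝ) (hX : ContDiffOn ℝ 1 X U)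
    (V : ℝ × ℝ → ℝ) (hV : ContDiffOn ℝ 1 V U)
    (hdiss : ∀ p ∈ U, fderiv ℝ V p (X p) ≤ 0)
    (p : ℝ → ℝ × ℝ)
    (hp : ∀ t, 0 ≤ t → HasDerivAt p (X (p t)) t)
    (hpU : ∀ t, 0 ≤ t → p t ∈ U) :
    ∀ q ∈ U,
      (∃ tk : ℕ → ℝ, Tendsto tk atTop atTop ∧
          Tendsto (fun k => p (tk k)) atTop (nhds q)) →
      fderiv ℝ V q (X q) = 0 := by
  intro q hq ⟨tk, htk, hpq⟩
  set g : ℝ × ℝ → ℝ := fun x => fderiv ℝ V x (X x) with hg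
  have hc0 : g q ≤ 0 := hdiss q hq
  rcases hc0.lt_or_eq with hc | hc
  swap
  · exact hc
  exfalso
  set c := g q with hcdef
  -- derivative of V ∘ p
  have hVd : ∀ t, 0 ≤ t → HasDerivAt (fun s => V (p s)) (g (p t)) t := by
    intro t ht
    have hd : DifferentiableAt ℝ V (p t) :=
      (hV.differentiableOn one_ne_zero).differentiableAt (hU.mem_nhds (hpU t ht))
    exact hd.hasFDerivAt.comp_hasDerivAt t (hp t ht)
  -- V ∘ p is antitone on [0, ∞)
  have hanti : AntitoneOn (fun t => V (p t)) (Ici 0) := by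
    apply antitoneOn_of_deriv_nonpos (convex_Ici 0)
    · exact fun t ht => (hVd t ht).differentiableAt.continuousAt.continuousWithinAt
    · rw [interior_Ici]
      exact fun t ht => (hVd t ht.le).differentiableAt.differentiableWithinAt
    · rw [interior_Ici]
      intro t ht
      rw [(hVd t ht.le).deriv]
      exact hdiss _ (hpU t ht.le)
  -- V (p (tk k)) → V q
  have hVq : ContinuousAt V q :=
    (hV.continuousOn q hq).continuousAt (hU.mem_nhds hq)
  have hVlim : Tendsto (fun k => V (p (tk k))) atTop (𝓝 (V q)) :=
    hVq.tendsto.comp hpq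
  -- V q is a lower bound along the trajectory
  have hlow : ∀ t, 0 ≤ t → V q ≤ V (p t) := by
    intro t ht
    refine le_of_tendsto hVlim ?_
    filter_upwards [htk.eventually_ge_atTop t] with k hk
    exact hanti ht (ht.trans hk) hk
  -- continuity of g at q
  have hgcont : ContinuousOn g U :=
    (hV.continuousOn_fderiv_of_isOpen hU le_rfl).clm_apply hX.continuousOn
  have hgq : ContinuousAt g q := (hgcont q hq).continuousAt (hU.mem_nhds hq)
  have hXq : ContinuousAt X q := (hX.continuousOn q hq).continuousAt (hU.mem_nhds hq)
  set M := ‖X q‖ + 1 with hMdef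
  have hM : 0 < M := by positivity
  have hev : ∀ᶠ x in 𝓝 q, g x ≤ c / 2 ∧ ‖X x‖ ≤ M := by
    have h1 : ∀ᶠ x in 𝓝 q, g x < c / 2 :=
      hgq.tendsto.eventually_lt_const (by linarith)
    have h2 : ∀ᶠ x in 𝓝 q, ‖X x‖ < M :=
      hXq.norm.tendsto.eventually_lt_const (by linarith)
    filter_upwards [h1, h2] with x hx1 hx2
    exact ⟨hx1.le, hx2.le⟩
  obtain ⟨r, hr, hball⟩ := Metric.nhds_basis_closedBall.eventually_iff.mp hev
  have hgb : ∀ x, dist x q ≤ 3 * r / 4 → g x ≤ c / 2 :=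
    fun x hx => (hball (by simp only [mem_closedBall]; linarith)).1
  have hXb : ∀ x, dist x q ≤ 3 * r / 4 → ‖X x‖ ≤ M :=
    fun x hx => (hball (by simp only [mem_closedBall]; linarith)).2
  set δ := r / (4 * M) with hδdef
  have hδpos : 0 < δ := by positivity
  have hMδ : M * δ ≤ r / 4 := by
    rw [hδdef]
    rw [mul_div_assoc']
    rw [div_le_div_iff₀ (by positivity) (by norm_num)]
    ring_nf
    nlinarith
  -- choose a large time
  have hk1 : ∀ᶠ k in atTop, (0:ℝ) ≤ tk k := htk.eventually_ge_atTop 0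
  have hk2 : ∀ᶠ k in atTop, dist (p (tk k)) q ≤ r / 2 := by
    have := hpq.eventually (Metric.closedBall_mem_nhds q (by positivity : (0:ℝ) < r / 2))
    filter_upwards [this] with k hk using hk
  have hk3 : ∀ᶠ k in atTop, V (p (tk k)) < V q - c / 2 * δ :=
    hVlim.eventually_lt_const (by nlinarith)
  obtain ⟨k, hk1, hk2, hk3⟩ := (hk1.and (hk2.and hk3)).exists
  set t₀ := tk k with ht₀def
  -- the trajectory stays near q on [t₀, t₀ + δ]
  have hstay : ∀ t ∈ Icc t₀ (t₀ + δ), dist (p t) q ≤ 3 * r / 4 :=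
    stay_in_ball_aux hp hr hM hδpos.le hMδ hk1 hk2 hXb
  -- on this interval V decreases at rate at least |c|/2
  have hdec : V (p (t₀ + δ)) ≤ V (p t₀) + c / 2 * δ := by
    refine decrease_aux hδpos.le (fun t ht => hVd t (hk1.trans ht.1)) ?_
    intro t ht
    exact hgb (p t) (hstay t ht)
  have hl := hlow (t₀ + δ) (by linarith)
  linarith
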